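/- Let d ≥ 3. There exist constants 0 < c ≤ c' < ∞ depending only on d such that for every r ≥ 1, every point x ∈ ℝ^d and every line L ⊂ ℝ^d with dist(x, L) = r, c · r^{−(d−2)} ≤ ∫_{S^{d−1}} H^{d−1}( Π_θ(B(x,1)) ∩ Π_θ(𝔠(L)) ) dσ(θ) ≤ c' · r^{−(d−2)}, where B(x,1) is the closed Euclidean ball of radius 1 centered at x and 𝔠(L) = {z ∈ ℝ^d : dist(z, L) ≤ 1} is the cylinder of radius 1 around L. -/

import Mathlib

open MeasureTheory
open scoped ENNReal

/-- A line in `ℝ^d`: a set of the form `{a + t • v : t ∈ ℝ}` with `v ≠ 0`. -/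
def IsLine {d : ℕ} (L : Set (EuclideanSpace ℝ (Fin d))) : Prop :=
  ∃ a v : EuclideanSpace ℝ (Fin d), v ≠ 0 ∧ L = {x | ∃ t : ℝ, x = a + t • v}

/-- The cylinder of radius `r` around a set `L`. -/
def cylinder {d : ℕ} (L : Set (EuclideanSpace ℝ (Fin d))) (r : ℝ) :
    Set (EuclideanSpace ℝ (Fin d)) :=
  {x | Metric.infDist x L ≤ r}

/-- Orthogonal projection onto the hyperplane `θ^⊥` (for `θ` a unit vector). -/
noncomputable def projHyp {d : ℕ} (θ x : EuclideanSpace ℝ (Fin d)) :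
    EuclideanSpace ℝ (Fin d) :=
  x - (inner ℝ x θ : ℝ) • θ

/-- The rotation-invariant (uniform) probability measure on the unit sphere of `ℝ^d`. -/
noncomputable def sphereUniform (d : ℕ) :
    Measure (Metric.sphere (0 : EuclideanSpace ℝ (Fin d)) 1) :=
  (((volume : Measure (EuclideanSpace ℝ (Fin d))).toSphere Set.univ)⁻¹) •
    ((volume : Measure (EuclideanSpace ℝ (Fin d))).toSphere)

/- ======================= auxiliary development ======================= -/

open Metric Set
open scoped RealInnerProductSpace Pointwise

section Main
variable {d : ℕ}
local notation "E" => EuclideanSpace ℝ (Fin d)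

/-- helper: if two vectors are orthogonal then `‖A‖ ≤ ‖A + B‖`. -/
lemma norm_le_norm_add_of_inner_eq_zero {A B : E} (h : ⟪A, B⟫ = 0) : ‖A‖ ≤ ‖A + B‖ := by
  have h2 : ‖A‖ ^ 2 ≤ ‖A + B‖ ^ 2 := by
    rw [norm_add_sq_real, h]
    nlinarith [sq_nonneg ‖B‖]
  nlinarith [norm_nonneg A, norm_nonneg (A + B)]

lemma isline_unit {a v : E} (hv : v ≠ 0) :
    {x : E | ∃ t : ℝ, x = a + t • v} = {x : E | ∃ t : ℝ, x = a + t • (‖v‖⁻¹ • v)} := by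
  have hv' : (‖v‖ : ℝ) ≠ 0 := by simpa using hv
  ext x
  constructor
  · rintro ⟨t, rfl⟩
    refine ⟨t * ‖v‖, ?_⟩
    rw [smul_smul, mul_assoc, mul_inv_cancel₀ hv', mul_one]
  · rintro ⟨t, rfl⟩
    exact ⟨t * ‖v‖⁻¹, by rw [smul_smul]⟩

lemma line_infDist (a u : E) (hu : ‖u‖ = 1) (z : E) :
    Metric.infDist z {x : E | ∃ t : ℝ, x = a + t • u} = ‖z - a - ⟪z - a, u⟫ • u‖ := by
  set L : Set E := {x : E | ∃ t : ℝ, x = a + t • u} with hL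
  have hne : L.Nonempty := ⟨a, 0, by simp⟩
  have hq : a + ⟪z - a, u⟫ • u ∈ L := ⟨_, rfl⟩
  have hAu : ⟪z - a - ⟪z - a, u⟫ • u, u⟫ = 0 := by
    rw [inner_sub_left, real_inner_smul_left, real_inner_self_eq_norm_sq, hu]
    ring
  have key : ∀ y ∈ L, ‖z - a - ⟪z - a, u⟫ • u‖ ≤ dist z y := by
    rintro y ⟨t, rfl⟩
    have horth : ⟪z - a - ⟪z - a, u⟫ • u, (⟪z - a, u⟫ - t) • u⟫ = 0 := by
      rw [real_inner_smul_right, hAu, mul_zero]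
    have hdecomp : z - (a + t • u) = (z - a - ⟪z - a, u⟫ • u) + (⟪z - a, u⟫ - t) • u := by
      rw [sub_smul]; abel
    rw [dist_eq_norm, hdecomp]
    exact norm_le_norm_add_of_inner_eq_zero horth
  refine le_antisymm ?_ ?_
  · calc Metric.infDist z L ≤ dist z (a + ⟪z - a, u⟫ • u) := Metric.infDist_le_dist_of_mem hq
      _ = ‖z - a - ⟪z - a, u⟫ • u‖ := by rw [dist_eq_norm]; congr 1; abel
  · by_contra hlt
    push_neg at hlt
    obtain ⟨y, hy, hdy⟩ := (Metric.infDist_lt_iff hne).1 hlt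
    exact absurd hdy (not_lt.2 (key y hy))

/-- membership in cylinder around a unit-direction line. -/
lemma mem_cylinder_iff (a u : E) (hu : ‖u‖ = 1) (s : ℝ) (z : E) :
    z ∈ cylinder {x : E | ∃ t : ℝ, x = a + t • u} s ↔ ‖z - a - ⟪z - a, u⟫ • u‖ ≤ s := by
  rw [_root_.cylinder, mem_setOf_eq, line_infDist a u hu z]

-- projHyp basics
lemma projHyp_apply (θ x : E) : projHyp θ x = x - ⟪x, θ⟫ • θ := rfl

lemma inner_projHyp (θ x : E) (hθ : ‖θ‖ = 1) : ⟪projHyp θ x, θ⟫ = 0 := by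
  rw [projHyp_apply, inner_sub_left, real_inner_smul_left, real_inner_self_eq_norm_sq, hθ]
  ring

lemma projHyp_sub (θ x y : E) : projHyp θ x - projHyp θ y = projHyp θ (x - y) := by
  simp only [projHyp_apply, inner_sub_left, sub_smul]
  abel

lemma projHyp_smul (θ : E) (c : ℝ) (x : E) : projHyp θ (c • x) = c • projHyp θ x := by
  simp only [projHyp_apply, real_inner_smul_left, smul_sub, smul_smul]

lemma projHyp_eq_zero_iff (θ x : E) (hθ : ‖θ‖ = 1) : projHyp θ x = 0 ↔ x = ⟪x, θ⟫ • θ := by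
  rw [projHyp_apply, sub_eq_zero]

lemma norm_projHyp_le (θ x : E) (hθ : ‖θ‖ = 1) : ‖projHyp θ x‖ ≤ ‖x‖ := by
  have h : x = projHyp θ x + ⟪x, θ⟫ • θ := by rw [projHyp_apply]; abel
  have horth : ⟪projHyp θ x, ⟪x, θ⟫ • θ⟫ = 0 := by
    rw [real_inner_smul_right, inner_projHyp θ x hθ, mul_zero]
  calc ‖projHyp θ x‖ ≤ ‖projHyp θ x + ⟪x, θ⟫ • θ‖ := norm_le_norm_add_of_inner_eq_zero horth
    _ = ‖x‖ := by rw [← h]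

/-- projection of a closed ball onto the hyperplane: exact description. -/
lemma projHyp_image_closedBall (θ : E) (hθ : ‖θ‖ = 1) (z₀ : E) (s : ℝ) (hs : 0 ≤ s) :
    projHyp θ '' Metric.closedBall z₀ s
      = {y : E | ⟪y, θ⟫ = 0 ∧ ‖y - projHyp θ z₀‖ ≤ s} := by
  ext y
  constructor
  · rintro ⟨z, hz, rfl⟩
    refine ⟨inner_projHyp θ z hθ, ?_⟩
    rw [projHyp_sub]
    calc ‖projHyp θ (z - z₀)‖ ≤ ‖z - z₀‖ := norm_projHyp_le θ _ hθ
      _ ≤ s := by rwa [← dist_eq_norm, ← Metric.mem_closedBall]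
  · rintro ⟨hyθ, hys⟩
    refine ⟨y + ⟪z₀, θ⟫ • θ, ?_, ?_⟩
    · rw [Metric.mem_closedBall, dist_eq_norm]
      have : y + ⟪z₀, θ⟫ • θ - z₀ = y - projHyp θ z₀ := by
        rw [projHyp_apply]; abel
      rwa [this]
    · rw [projHyp_apply, inner_add_left, hyθ, real_inner_smul_left,
        real_inner_self_eq_norm_sq, hθ]
      simp


/-- disk of radius `s` in the hyperplane `θ^⊥` centered at `c`. -/
def capSet (θ c : E) (s : ℝ) : Set E := {y : E | ⟪y, θ⟫ = 0 ∧ ‖y - c‖ ≤ s}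

noncomputable def capVal (d : ℕ) (s : ℝ) : ℝ≥0∞ :=
  μH[(d:ℝ)-1] (Metric.closedBall (0 : EuclideanSpace ℝ (Fin (d-1))) s)

lemma capSet_translate (θ c : E) (s : ℝ) (hc : ⟪c, θ⟫ = 0) :
    capSet θ c s = (fun y => y + c) '' capSet θ 0 s := by
  ext y
  constructor
  · rintro ⟨h1, h2⟩
    refine ⟨y - c, ⟨?_, by simpa using h2⟩, by simp⟩
    rw [inner_sub_left, h1, hc, sub_zero]
  · rintro ⟨z, ⟨h1, h2⟩, rfl⟩
    refine ⟨by rw [inner_add_left, h1, hc, add_zero], by simpa using h2⟩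

lemma hausdorff_capSet (hd : 1 ≤ d) (θ c : E) (hθ : ‖θ‖ = 1) (hc : ⟪c, θ⟫ = 0)
    (s : ℝ) : μH[(d:ℝ)-1] (capSet θ c s) = capVal d s := by
  have hdR : (0:ℝ) ≤ (d:ℝ) - 1 := by
    have : (1:ℝ) ≤ (d:ℝ) := by exact_mod_cast hd
    linarith
  -- reduce to c = 0
  have h1 : μH[(d:ℝ)-1] (capSet θ c s) = μH[(d:ℝ)-1] (capSet θ 0 s) := by
    rw [capSet_translate θ c s hc]
    exact (IsometryEquiv.addRight c).isometry.hausdorffMeasure_image (Or.inl hdR) _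
  rw [h1]
  -- the orthogonal complement subspace
  have hθ0 : θ ≠ 0 := by intro h; rw [h, norm_zero] at hθ; norm_num at hθ
  have hfr : Module.finrank ℝ ((ℝ ∙ θ)ᗮ : Submodule ℝ E) = d - 1 := by
    haveI : Fact (Module.finrank ℝ E = (d - 1) + 1) :=
      ⟨by rw [finrank_euclideanSpace_fin]; omega⟩
    exact Submodule.finrank_orthogonal_span_singleton hθ0
  set J : ((ℝ ∙ θ)ᗮ : Submodule ℝ E) ≃ₗᵢ[ℝ] EuclideanSpace ℝ (Fin (d-1)) :=
    (stdOrthonormalBasis ℝ ((ℝ ∙ θ)ᗮ : Submodule ℝ E)).repr.trans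
      (LinearIsometryEquiv.piLpCongrLeft 2 ℝ ℝ (finCongr hfr)) with hJ
  set f : EuclideanSpace ℝ (Fin (d-1)) → E := fun y => (J.symm y : E) with hf
  have hfiso : Isometry f := by
    intro y z
    rw [hf]
    simp only [Subtype.edist_eq]  -- edist of coercion
    exact J.symm.isometry y z
  have himg : f '' Metric.closedBall 0 s = capSet θ 0 s := by
    ext y
    constructor
    · rintro ⟨z, hz, rfl⟩
      have hmem : (J.symm z : E) ∈ ((ℝ ∙ θ)ᗮ : Submodule ℝ E) := (J.symm z).2
      refine ⟨?_, ?_⟩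
      · rw [real_inner_comm]
        exact (Submodule.mem_orthogonal_singleton_iff_inner_right).1 hmem
      · rw [sub_zero]
        have h3 : ‖(J.symm z : E)‖ = ‖z‖ := by
          rw [← J.symm.norm_map z]; rfl
        rw [hf]
        simp only [h3]
        simpa [Metric.mem_closedBall, dist_zero_right] using hz
    · rintro ⟨h1, h2⟩
      have hyW : y ∈ ((ℝ ∙ θ)ᗮ : Submodule ℝ E) := by
        rw [Submodule.mem_orthogonal_singleton_iff_inner_right, real_inner_comm]
        exact h1
      refine ⟨J ⟨y, hyW⟩, ?_, ?_⟩
      · rw [Metric.mem_closedBall, dist_zero_right, J.norm_map]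
        simpa using h2
      · rw [hf]; simp
  rw [← himg, hfiso.hausdorffMeasure_image (Or.inl hdR), capVal]


lemma prod_threshold (d : ℕ) (hd : 2 ≤ d) (A B : ℝ) :
    (∏ i : Fin d, (if (i:ℕ) < 2 then A else B)) = A^2 * B^(d-2) := by
  have h2 : (∏ i ∈ Finset.Ico 2 d, (if i < 2 then A else B)) = B^(d-2) := by
    rw [Finset.prod_congr rfl (fun i hi => if_neg (Nat.not_lt.2 (Finset.mem_Ico.1 hi).1)),
      Finset.prod_const, Nat.card_Ico]
  have h1 : (∏ i ∈ Finset.range 2, (if i < 2 then A else B)) = A^2 := by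
    rw [Finset.prod_range_succ, Finset.prod_range_one]
    norm_num [sq]
  rw [Fin.prod_univ_eq_prod_range (fun i => if i < 2 then A else B) d,
    ← Finset.prod_range_mul_prod_Ico _ hd, h1, h2]

lemma sum_threshold (d : ℕ) (hd : 2 ≤ d) (A B : ℝ) :
    (∑ i : Fin d, (if (i:ℕ) < 2 then A else B)) = 2*A + ((d-2:ℕ):ℝ)*B := by
  have h2 : (∑ i ∈ Finset.Ico 2 d, (if i < 2 then A else B)) = ((d-2:ℕ):ℝ)*B := by
    rw [Finset.sum_congr rfl (fun i hi => if_neg (Nat.not_lt.2 (Finset.mem_Ico.1 hi).1)),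
      Finset.sum_const, Nat.card_Ico, nsmul_eq_mul]
  have h1 : (∑ i ∈ Finset.range 2, (if i < 2 then A else B)) = 2*A := by
    rw [Finset.sum_range_succ, Finset.sum_range_one]
    norm_num; ring
  rw [Fin.sum_univ_eq_sum_range (fun i => if i < 2 then A else B) d,
    ← Finset.sum_range_add_sum_Ico _ hd, h1, h2]

lemma norm_sq_eucl {d : ℕ} (v : EuclideanSpace ℝ (Fin d)) : ‖v‖^2 = ∑ i, (v i)^2 := by
  rw [EuclideanSpace.norm_eq, Real.sq_sqrt (by positivity)]
  congr 1
  ext i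
  rw [Real.norm_eq_abs, sq_abs]

lemma coord_le_norm {d : ℕ} (v : EuclideanSpace ℝ (Fin d)) (i : Fin d) : |v i| ≤ ‖v‖ := by
  have h1 : |v i|^2 ≤ ‖v‖^2 := by
    rw [norm_sq_eucl, sq_abs]
    exact Finset.single_le_sum (fun j _ => sq_nonneg (v j)) (Finset.mem_univ i)
  nlinarith [norm_nonneg v, abs_nonneg (v i)]


lemma exp_cast (d : ℕ) (hd : 1 ≤ d) : ((d:ℝ) - 1) = ((d - 1 : ℕ) : ℝ) := by
  push_cast [Nat.cast_sub hd]
  ring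

lemma muH_pi_eq (n : ℕ) :
    (μH[((n:ℕ) : ℝ)] : Measure (Fin n → ℝ)) = volume := by
  rw [show ((n:ℕ):ℝ) = ((Fintype.card (Fin n) : ℕ) : ℝ) by simp]
  exact MeasureTheory.hausdorffMeasure_pi_real

lemma capVal_lt_top (d : ℕ) (hd : 1 ≤ d) (s : ℝ) : capVal d s < ⊤ := by
  set n := d - 1 with hn
  have hexp : ((d:ℝ) - 1) = ((n:ℕ) : ℝ) := exp_cast d hd
  have hdR : (0:ℝ) ≤ (d:ℝ) - 1 := by rw [hexp]; positivity
  set F := EuclideanSpace ℝ (Fin n)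
  set ψ : (Fin n → ℝ) → F := ⇑(WithLp.equiv 2 (Fin n → ℝ)).symm with hψ
  have hψlip : LipschitzWith (Fintype.card (Fin n) ^ ((1:ℝ≥0∞)/2).toReal) ψ :=
    PiLp.lipschitzWith_toLp 2 (fun _ : Fin n => ℝ)
  have hsub : Metric.closedBall (0 : F) s ⊆ ψ '' (Set.pi Set.univ fun _ : Fin n => Icc (-s) s) := by
    intro y hy
    refine ⟨WithLp.equiv 2 (Fin n → ℝ) y, ?_, by simp [hψ]⟩
    intro i _
    have hnorm : ‖y‖^2 = ∑ j, ‖y j‖^2 := by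
      rw [EuclideanSpace.norm_eq]
      exact Real.sq_sqrt (by positivity)
    have h2 : |y i| ^ 2 ≤ ‖y‖ ^ 2 := by
      rw [hnorm, ← Real.norm_eq_abs]
      exact Finset.single_le_sum (fun j _ => sq_nonneg ‖y j‖) (Finset.mem_univ i)
    have h1 : |y i| ≤ ‖y‖ := by nlinarith [norm_nonneg y, abs_nonneg (y i)]
    have h3 : ‖y‖ ≤ s := by simpa [dist_zero_right] using hy
    have h4 := h1.trans h3
    show -s ≤ y i ∧ y i ≤ s
    constructor
    · linarith [neg_abs_le (y i)]
    · linarith [le_abs_self (y i)]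
  refine lt_of_le_of_lt (le_trans (measure_mono hsub)
    (hψlip.hausdorffMeasure_image_le hdR _)) (ENNReal.mul_lt_top ?_ ?_)
  · exact ENNReal.rpow_lt_top_of_nonneg hdR (by simp)
  · rw [hexp, muH_pi_eq n, volume_pi_pi]
    simp only [Real.volume_Icc]
    exact ENNReal.prod_lt_top fun _ _ => ENNReal.ofReal_lt_top

lemma capVal_pos (d : ℕ) (hd : 3 ≤ d) : 0 < capVal d (1/2) := by
  set n := d - 1 with hn
  have hn1 : 1 ≤ n := by omega
  have hexp : ((d:ℝ) - 1) = ((n:ℕ) : ℝ) := exp_cast d (by omega)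
  have hdR : (0:ℝ) ≤ (d:ℝ) - 1 := by rw [hexp]; positivity
  set F := EuclideanSpace ℝ (Fin n)
  set φ : F → (Fin n → ℝ) := ⇑(WithLp.equiv 2 (Fin n → ℝ)) with hφ
  have hφlip : LipschitzWith 1 φ := PiLp.lipschitzWith_ofLp 2 _
  set t : ℝ := 1/(2*(n:ℝ)) with ht
  have hnR : (1:ℝ) ≤ (n:ℝ) := by exact_mod_cast hn1
  have htpos : 0 < t := by rw [ht]; positivity
  have hsub : (Set.pi Set.univ fun _ : Fin n => Icc (-t) t) ⊆ φ '' Metric.closedBall (0:F) (1/2) := by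
    intro y hy
    refine ⟨(WithLp.equiv 2 (Fin n → ℝ)).symm y, ?_, by simp [hφ]⟩
    rw [Metric.mem_closedBall, dist_zero_right]
    set z : F := (WithLp.equiv 2 (Fin n → ℝ)).symm y with hzdef
    have hz : ∀ i, z i = y i := fun i => rfl
    rw [EuclideanSpace.norm_eq]
    have hbd : ∑ i, ‖z i‖ ^ 2 ≤ (n:ℝ) * t^2 := by
      calc ∑ i, ‖z i‖ ^ 2 ≤ ∑ _i : Fin n, t^2 := by
            apply Finset.sum_le_sum
            intro i _
            rw [hz i, Real.norm_eq_abs, sq_abs]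
            exact sq_le_sq' (hy i (Set.mem_univ i)).1 (hy i (Set.mem_univ i)).2
        _ = (n:ℝ) * t^2 := by rw [Finset.sum_const]; simp [mul_comm]
    refine le_trans (Real.sqrt_le_sqrt hbd) ?_
    rw [show (n:ℝ) * t^2 = (1/(4*(n:ℝ))) by rw [ht]; field_simp; ring]
    rw [show (1:ℝ)/2 = Real.sqrt (1/4) by
      rw [show (1:ℝ)/4 = (1/2)^2 by norm_num, Real.sqrt_sq (by norm_num)]]
    apply Real.sqrt_le_sqrt
    rw [div_le_div_iff₀ (by positivity) (by norm_num)]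
    nlinarith
  have h1 : volume (Set.pi Set.univ fun _ : Fin n => Icc (-t) t) ≤ capVal d (1/2) := by
    have e1 : volume (Set.pi Set.univ fun _ : Fin n => Icc (-t) t)
        = μH[(d:ℝ)-1] (Set.pi Set.univ fun _ : Fin n => Icc (-t) t) := by
      rw [hexp, muH_pi_eq n]
    rw [e1]
    refine le_trans (measure_mono hsub) ?_
    refine le_trans (hφlip.hausdorffMeasure_image_le hdR _) ?_
    simp [capVal]
  refine lt_of_lt_of_le ?_ h1
  rw [volume_pi_pi]
  simp only [Real.volume_Icc]
  rw [Finset.prod_const]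
  apply ENNReal.pow_pos
  rw [ENNReal.ofReal_pos]
  linarith

/-- projection onto the orthocomplement of span(u, w), for u, w orthonormal. -/
noncomputable def Pvec (u w z : E) : E := z - ⟪z, u⟫ • u - ⟪z, w⟫ • w

lemma Pvec_inner_u (u w : E) (hu : ‖u‖ = 1) (huw : ⟪u, w⟫ = 0) (z : E) :
    ⟪Pvec u w z, u⟫ = 0 := by
  simp only [Pvec, inner_sub_left, real_inner_smul_left]
  rw [real_inner_self_eq_norm_sq, hu, (real_inner_comm u w).trans huw]
  ring

lemma Pvec_inner_w (u w : E) (hw : ‖w‖ = 1) (huw : ⟪u, w⟫ = 0) (z : E) :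
    ⟪Pvec u w z, w⟫ = 0 := by
  simp only [Pvec, inner_sub_left, real_inner_smul_left]
  rw [real_inner_self_eq_norm_sq, hw, huw]
  ring

lemma Pvec_sub (u w z₁ z₂ : E) : Pvec u w (z₁ - z₂) = Pvec u w z₁ - Pvec u w z₂ := by
  simp only [Pvec, inner_sub_left, sub_smul]
  abel

lemma Pvec_add (u w z₁ z₂ : E) : Pvec u w (z₁ + z₂) = Pvec u w z₁ + Pvec u w z₂ := by
  simp only [Pvec, inner_add_left, add_smul]
  abel

lemma Pvec_smul (u w : E) (c : ℝ) (z : E) : Pvec u w (c • z) = c • Pvec u w z := by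
  simp only [Pvec, real_inner_smul_left, smul_sub, smul_smul]

lemma Pvec_u (u w : E) (hu : ‖u‖ = 1) (huw : ⟪u, w⟫ = 0) : Pvec u w u = 0 := by
  have h1 : ⟪u, u⟫ = 1 := by rw [real_inner_self_eq_norm_sq, hu]; norm_num
  rw [Pvec, h1, huw]
  simp

lemma Pvec_w (u w : E) (hw : ‖w‖ = 1) (huw : ⟪u, w⟫ = 0) : Pvec u w w = 0 := by
  have h1 : ⟪w, w⟫ = 1 := by rw [real_inner_self_eq_norm_sq, hw]; norm_num
  rw [Pvec, h1, (real_inner_comm u w).trans huw]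
  simp

lemma norm_Pvec_le (u w : E) (hu : ‖u‖ = 1) (hw : ‖w‖ = 1) (huw : ⟪u, w⟫ = 0) (z : E) :
    ‖Pvec u w z‖ ≤ ‖z‖ := by
  have hdecomp : z = Pvec u w z + (⟪z, u⟫ • u + ⟪z, w⟫ • w) := by
    simp only [Pvec]; abel
  have horth : ⟪Pvec u w z, ⟪z, u⟫ • u + ⟪z, w⟫ • w⟫ = 0 := by
    rw [inner_add_right, real_inner_smul_right, real_inner_smul_right,
      Pvec_inner_u u w hu huw, Pvec_inner_w u w hw huw]
    ring
  calc ‖Pvec u w z‖ ≤ ‖Pvec u w z + (⟪z, u⟫ • u + ⟪z, w⟫ • w)‖ :=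
        norm_le_norm_add_of_inner_eq_zero horth
    _ = ‖z‖ := by rw [← hdecomp]

noncomputable def wvec (a u x : E) (r : ℝ) : E := r⁻¹ • (x - a - ⟪x - a, u⟫ • u)

lemma norm_wvec (a u x : E) (r : ℝ) (hr : 0 < r) (hdist : ‖x - a - ⟪x - a, u⟫ • u‖ = r) :
    ‖wvec a u x r‖ = 1 := by
  rw [wvec, norm_smul, hdist, Real.norm_eq_abs, abs_inv,
    abs_of_pos hr, inv_mul_cancel₀ (ne_of_gt hr)]

lemma inner_u_wvec (a u x : E) (r : ℝ) (hu : ‖u‖ = 1) : ⟪u, wvec a u x r⟫ = 0 := by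
  rw [wvec, real_inner_smul_right, real_inner_comm]
  rw [inner_sub_left, real_inner_smul_left, real_inner_self_eq_norm_sq, hu]
  ring

lemma x_eq_decomp (a u x : E) (r : ℝ) (hr : 0 < r) :
    x - a = ⟪x - a, u⟫ • u + r • wvec a u x r := by
  rw [wvec, smul_smul, mul_inv_cancel₀ (ne_of_gt hr), one_smul]
  abel

/-- Emptiness criterion. -/
lemma empty_criterion (a u x : E) (r : ℝ) (hu : ‖u‖ = 1) (hr : 1 ≤ r)
    (hdist : ‖x - a - ⟪x - a, u⟫ • u‖ = r) (θ : E) (hθ : ‖θ‖ = 1)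
    (hne : (projHyp θ '' Metric.closedBall x 1 ∩
      projHyp θ '' cylinder {y : E | ∃ t : ℝ, y = a + t • u} 1).Nonempty) :
    (r - 2) * ‖Pvec u (wvec a u x r) θ‖ ≤ 2 := by
  have hr0 : (0:ℝ) < r := lt_of_lt_of_le one_pos hr
  set w : E := wvec a u x r with hwdef
  have hw : ‖w‖ = 1 := norm_wvec a u x r hr0 hdist
  have huw : ⟪u, w⟫ = 0 := inner_u_wvec a u x r hu
  obtain ⟨y, ⟨b, hb, hyb⟩, ⟨z, hz, hyz⟩⟩ := hne
  set t : ℝ := ⟪b - z, θ⟫ with htdef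
  have hbz : b - z = t • θ := by
    have h0 : projHyp θ (b - z) = 0 := by rw [← projHyp_sub, hyb, hyz, sub_self]
    rw [projHyp, sub_eq_zero] at h0
    exact h0
  set s : ℝ := ⟪z - a, u⟫ with hsdef
  set e : E := z - a - s • u with hedef
  have he : ‖e‖ ≤ 1 := (mem_cylinder_iff a u hu 1 z).1 hz
  have hbx : ‖b - x‖ ≤ 1 := by
    rw [← dist_eq_norm]; exact Metric.mem_closedBall.1 hb
  set m : ℝ := ⟪x - a, u⟫ with hmdef
  have hkey : b - z = (m - s) • u + r • w + (b - x) - e := by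
    have hx : x - a = m • u + r • w := x_eq_decomp a u x r hr0
    have expand : b - z = (b - x) + (x - a) - (z - a) := by abel
    have hza : z - a = s • u + e := by rw [hedef]; abel
    rw [expand, hx, hza, sub_smul]
    abel
  have hinner_w : t * ⟪θ, w⟫ = r + ⟪b - x, w⟫ - ⟪e, w⟫ := by
    have h1 : ⟪b - z, w⟫ = t * ⟪θ, w⟫ := by rw [hbz, real_inner_smul_left]
    have h2 : ⟪b - z, w⟫ = r + ⟪b - x, w⟫ - ⟪e, w⟫ := by
      rw [hkey, inner_sub_left, inner_add_left, inner_add_left, real_inner_smul_left,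
        real_inner_smul_left, huw, real_inner_self_eq_norm_sq, hw]
      ring
    rw [← h1, h2]
  have hCS1 : |⟪b - x, w⟫| ≤ 1 := by
    calc |⟪b - x, w⟫| ≤ ‖b - x‖ * ‖w‖ := abs_real_inner_le_norm _ _
      _ ≤ 1 := by rw [hw, mul_one]; exact hbx
  have hCS2 : |⟪e, w⟫| ≤ 1 := by
    calc |⟪e, w⟫| ≤ ‖e‖ * ‖w‖ := abs_real_inner_le_norm _ _
      _ ≤ 1 := by rw [hw, mul_one]; exact he
  have htw : r - 2 ≤ t * ⟪θ, w⟫ := by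
    rw [hinner_w]
    linarith [(abs_le.1 hCS1).1, (abs_le.1 hCS2).2]
  have htabs : r - 2 ≤ |t| := by
    have h1 : t * ⟪θ, w⟫ ≤ |t| * |⟪θ, w⟫| := by
      calc t * ⟪θ, w⟫ ≤ |t * ⟪θ, w⟫| := le_abs_self _
        _ = |t| * |⟪θ, w⟫| := abs_mul _ _
    have h2 : |⟪θ, w⟫| ≤ 1 := by
      calc |⟪θ, w⟫| ≤ ‖θ‖ * ‖w‖ := abs_real_inner_le_norm _ _
        _ = 1 := by rw [hθ, hw, mul_one]
    nlinarith [abs_nonneg t]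
  have hPvec : t • Pvec u w θ = Pvec u w ((b - x) - e) := by
    have h1 : Pvec u w (b - z) = t • Pvec u w θ := by rw [hbz, Pvec_smul]
    have h2 : Pvec u w (b - z) = Pvec u w ((b - x) - e) := by
      have hkey2 : b - z = ((m - s) • u + r • w) + ((b - x) - e) := by
        rw [hkey]; abel
      rw [hkey2, Pvec_add, Pvec_add, Pvec_smul, Pvec_smul,
        Pvec_u u w hu huw, Pvec_w u w hw huw]
      simp
    rw [← h1, h2]
  have hPbound : |t| * ‖Pvec u w θ‖ ≤ 2 := by
    have h1 : ‖t • Pvec u w θ‖ = |t| * ‖Pvec u w θ‖ := by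
      rw [norm_smul, Real.norm_eq_abs]
    rw [← h1, hPvec]
    calc ‖Pvec u w ((b - x) - e)‖ ≤ ‖(b - x) - e‖ := norm_Pvec_le u w hu hw huw _
      _ ≤ ‖b - x‖ + ‖e‖ := norm_sub_le _ _
      _ ≤ 2 := by linarith
  calc (r - 2) * ‖Pvec u w θ‖ ≤ |t| * ‖Pvec u w θ‖ :=
        mul_le_mul_of_nonneg_right htabs (norm_nonneg _)
    _ ≤ 2 := hPbound

/-- Lower-bound criterion. -/
lemma good_criterion (a u x : E) (r : ℝ) (hu : ‖u‖ = 1) (hr : 1 ≤ r)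
    (hdist : ‖x - a - ⟪x - a, u⟫ • u‖ = r) (θ : E) (hθ : ‖θ‖ = 1)
    (hβ : 1/2 ≤ ⟪θ, wvec a u x r⟫)
    (hη : ‖Pvec u (wvec a u x r) θ‖ ≤ 1/(8*r)) :
    ∃ c : E, ⟪c, θ⟫ = 0 ∧
      capSet θ c (1/2) ⊆ projHyp θ '' Metric.closedBall x 1 ∩
        projHyp θ '' cylinder {y : E | ∃ t : ℝ, y = a + t • u} 1 := by
  have hr0 : (0:ℝ) < r := lt_of_lt_of_le one_pos hr
  set w : E := wvec a u x r with hwdef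
  have hw : ‖w‖ = 1 := norm_wvec a u x r hr0 hdist
  have huw : ⟪u, w⟫ = 0 := inner_u_wvec a u x r hu
  set β : ℝ := ⟪θ, w⟫ with hβdef
  have hβ0 : (0:ℝ) < β := lt_of_lt_of_le (by norm_num) hβ
  set α : ℝ := ⟪θ, u⟫ with hαdef
  set η : E := Pvec u w θ with hηdef
  have hθdecomp : θ = α • u + β • w + η := by
    rw [hηdef, Pvec, hαdef, hβdef]
    abel
  set t : ℝ := -r/β with htdef
  set m : ℝ := ⟪x - a, u⟫ with hmdef
  set q : E := a + (m + t*α) • u with hqdef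
  have hqL : q ∈ {y : E | ∃ t' : ℝ, y = a + t' • u} := ⟨m + t*α, rfl⟩
  have hqx : q - x = t • θ - t • η := by
    have hx : x - a = m • u + r • w := x_eq_decomp a u x r hr0
    have htβ : t * β = -r := by
      rw [htdef, div_mul_cancel₀]
      exact ne_of_gt hβ0
    have step : t • θ - t • η = (t*α) • u + (t*β) • w := by
      rw [hθdecomp]
      rw [smul_add, smul_add, smul_smul, smul_smul]
      abel
    rw [step, htβ]
    have : q - x = (m + t*α) • u - (x - a) := by rw [hqdef]; abel
    rw [this, hx, add_smul, neg_smul]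
    abel
  have ht_abs : |t| ≤ 2*r := by
    rw [htdef, abs_div, abs_neg, abs_of_pos hr0, abs_of_pos hβ0]
    rw [div_le_iff₀ hβ0]
    nlinarith
  have hprojq : ‖projHyp θ q - projHyp θ x‖ ≤ 1/2 := by
    rw [projHyp_sub, hqx]
    have hprojθ : projHyp θ θ = 0 := by
      rw [projHyp, real_inner_self_eq_norm_sq, hθ]
      simp
    have hsmul : ∀ (c : ℝ) (z : E), projHyp θ (c • z) = c • projHyp θ z := by
      intro c z
      simp only [projHyp, real_inner_smul_left, smul_sub, smul_smul]
    have hexp : projHyp θ (t • θ - t • η) = -(t • projHyp θ η) := by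
      have hlin : projHyp θ (t • θ - t • η) = projHyp θ (t • θ) - projHyp θ (t • η) :=
        (projHyp_sub θ _ _).symm
      rw [hlin, hsmul, hsmul, hprojθ]
      simp
    rw [hexp, norm_neg, norm_smul, Real.norm_eq_abs]
    have h1 : ‖projHyp θ η‖ ≤ ‖η‖ := norm_projHyp_le θ η hθ
    calc |t| * ‖projHyp θ η‖ ≤ (2*r) * (1/(8*r)) := by
          apply mul_le_mul ht_abs (h1.trans hη) (norm_nonneg _)
          positivity
      _ = 1/4 := by field_simp; ring
      _ ≤ 1/2 := by norm_num
  refine ⟨projHyp θ q, inner_projHyp θ q hθ, ?_⟩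
  rintro y ⟨hy1, hy2⟩
  constructor
  · rw [projHyp_image_closedBall θ hθ x 1 (by norm_num)]
    refine ⟨hy1, ?_⟩
    calc ‖y - projHyp θ x‖ = ‖(y - projHyp θ q) + (projHyp θ q - projHyp θ x)‖ := by
          congr 1; abel
      _ ≤ ‖y - projHyp θ q‖ + ‖projHyp θ q - projHyp θ x‖ := norm_add_le _ _
      _ ≤ 1/2 + 1/2 := add_le_add hy2 hprojq
      _ = 1 := by norm_num
  · have hball : Metric.closedBall q 1 ⊆ cylinder {y' : E | ∃ t' : ℝ, y' = a + t' • u} 1 := by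
      intro z hz
      have h2 : Metric.infDist z {y' : E | ∃ t' : ℝ, y' = a + t' • u} ≤ dist z q :=
        Metric.infDist_le_dist_of_mem hqL
      exact le_trans h2 (Metric.mem_closedBall.1 hz)
    apply Set.image_mono hball
    rw [projHyp_image_closedBall θ hθ q 1 (by norm_num)]
    exact ⟨hy1, le_trans hy2 (by norm_num)⟩

lemma exists_adapted_basis (hd : 2 ≤ d) (u w : E) (hu : ‖u‖ = 1) (hw : ‖w‖ = 1)
    (huw : ⟪u, w⟫ = 0) :
    ∃ b : OrthonormalBasis (Fin d) ℝ E,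
      b ⟨0, by omega⟩ = u ∧ b ⟨1, by omega⟩ = w := by
  obtain ⟨k, rfl⟩ : ∃ k, d = k + 2 := ⟨d - 2, by omega⟩
  have h01 : (0 : Fin (k+2)) ≠ 1 := by simp [Fin.ext_iff]
  set v : Fin (k+2) → EuclideanSpace ℝ (Fin (k+2)) := fun i => if i = 0 then u else w with hv
  have hortho : Orthonormal ℝ (({0, 1} : Set (Fin (k+2))).restrict v) := by
    constructor
    · rintro ⟨i, hi⟩
      rcases hi with rfl | hi
      · simp [hv, hu, Set.restrict]
      · rw [Set.mem_singleton_iff] at hi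
        subst hi
        simp [hv, h01, hw, Set.restrict]
    · rintro ⟨i, hi⟩ ⟨j, hj⟩ hij
      have hij' : i ≠ j := fun h => hij (Subtype.ext h)
      simp only [Set.restrict, Set.domRestrict_apply]
      rcases hi with rfl | hi <;> [skip; rw [Set.mem_singleton_iff] at hi]
      · rcases hj with rfl | hj
        · exact absurd rfl hij'
        · rw [Set.mem_singleton_iff] at hj; subst hj
          simp [hv, h01, huw]
      · subst hi
        rcases hj with rfl | hj
        · simp only [hv, if_neg h01, if_pos rfl]
          rw [real_inner_comm]; exact huw
        · rw [Set.mem_singleton_iff] at hj; subst hj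
          exact absurd rfl hij'
  obtain ⟨b, hb⟩ := hortho.exists_orthonormalBasis_extension_of_card_eq
    (by simp [finrank_euclideanSpace_fin])
  have e0 : (⟨0, by omega⟩ : Fin (k+2)) = 0 := by simp [Fin.ext_iff]
  have e1 : (⟨1, by omega⟩ : Fin (k+2)) = 1 := by simp [Fin.ext_iff]
  refine ⟨b, ?_, ?_⟩
  · rw [e0, hb 0 (by simp)]; simp [hv]
  · rw [e1, hb 1 (by simp)]; simp [hv, h01]

lemma repr_Pvec (u w : E) (hu : ‖u‖ = 1) (hw : ‖w‖ = 1) (huw : ⟪u, w⟫ = 0)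
    (b : OrthonormalBasis (Fin d) ℝ E) (i0 i1 : Fin d) (hi0v : (i0:ℕ) = 0) (hi1v : (i1:ℕ) = 1)
    (hb0 : b i0 = u) (hb1 : b i1 = w) (z : E) (i : Fin d) :
    b.repr (Pvec u w z) i = if (i:ℕ) < 2 then 0 else b.repr z i := by
  have hbr := b.repr_apply_apply
  by_cases hlt : (i:ℕ) < 2
  · rw [if_pos hlt]
    have : i = i0 ∨ i = i1 := by
      rcases (by omega : (i:ℕ) = 0 ∨ (i:ℕ) = 1) with h | h
      · exact Or.inl (Fin.ext (by rw [h, hi0v]))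
      · exact Or.inr (Fin.ext (by rw [h, hi1v]))
    rcases this with rfl | rfl
    · rw [hbr, hb0, real_inner_comm (Pvec u w z) u]
      exact Pvec_inner_u u w hu huw z
    · rw [hbr, hb1, real_inner_comm (Pvec u w z) w]
      exact Pvec_inner_w u w hw huw z
  · rw [if_neg hlt]
    have hne0 : i0 ≠ i := fun h => hlt (by rw [← h, hi0v]; omega)
    have hne1 : i1 ≠ i := fun h => hlt (by rw [← h, hi1v]; omega)
    have hbu : ⟪u, b i⟫ = 0 := by
      rw [← hb0]; exact b.orthonormal.2 hne0
    have hbw : ⟪w, b i⟫ = 0 := by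
      rw [← hb1]; exact b.orthonormal.2 hne1
    rw [hbr, hbr, real_inner_comm (Pvec u w z) (b i), Pvec, inner_sub_left, inner_sub_left,
      real_inner_smul_left, real_inner_smul_left, hbu, hbw, real_inner_comm z (b i)]
    ring

lemma norm_Pvec_sq (u w : E) (hu : ‖u‖ = 1) (hw : ‖w‖ = 1) (huw : ⟪u, w⟫ = 0)
    (b : OrthonormalBasis (Fin d) ℝ E) (i0 i1 : Fin d) (hi0v : (i0:ℕ) = 0) (hi1v : (i1:ℕ) = 1)
    (hb0 : b i0 = u) (hb1 : b i1 = w) (z : E) :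
    ‖Pvec u w z‖^2 = ∑ i : Fin d, (if (i:ℕ) < 2 then 0 else (b.repr z i)^2) := by
  have h1 : ‖Pvec u w z‖ = ‖b.repr (Pvec u w z)‖ := (b.repr.norm_map _).symm
  rw [h1, norm_sq_eucl]
  congr 1
  ext i
  rw [repr_Pvec u w hu hw huw b i0 i1 hi0v hi1v hb0 hb1 z i]
  by_cases hlt : (i:ℕ) < 2 <;> simp [hlt]

lemma coord_le_norm_Pvec (u w : E) (hu : ‖u‖ = 1) (hw : ‖w‖ = 1) (huw : ⟪u, w⟫ = 0)
    (b : OrthonormalBasis (Fin d) ℝ E) (i0 i1 : Fin d) (hi0v : (i0:ℕ) = 0) (hi1v : (i1:ℕ) = 1)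
    (hb0 : b i0 = u) (hb1 : b i1 = w) (z : E) (i : Fin d) (hi : ¬ ((i:ℕ) < 2)) :
    |b.repr z i| ≤ ‖Pvec u w z‖ := by
  have h1 : b.repr (Pvec u w z) i = b.repr z i := by
    rw [repr_Pvec u w hu hw huw b i0 i1 hi0v hi1v hb0 hb1 z i, if_neg hi]
  calc |b.repr z i| = |b.repr (Pvec u w z) i| := by rw [h1]
    _ ≤ ‖b.repr (Pvec u w z)‖ := coord_le_norm _ i
    _ = ‖Pvec u w z‖ := b.repr.norm_map _


lemma pvec_continuous (u w : E) : Continuous fun z : E => Pvec u w z := by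
  unfold Pvec
  fun_prop

/-- preimage-of-box volume computation. -/
lemma vol_box (b : OrthonormalBasis (Fin d) ℝ E) (I : Fin d → Set ℝ)
    (hI : ∀ i, MeasurableSet (I i)) :
    volume {z : E | ∀ i, b.repr z i ∈ I i} = ∏ i, volume (I i) := by
  have h1 : {z : E | ∀ i, b.repr z i ∈ I i}
      = ⇑b.repr ⁻¹' (((MeasurableEquiv.toLp 2 (Fin d → ℝ)).symm) ⁻¹'
          (Set.pi Set.univ I)) := by
    ext z
    simp only [Set.mem_setOf_eq, Set.mem_preimage, Set.mem_pi, Set.mem_univ, forall_true_left]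
    rfl
  rw [h1]
  have hmeas : MeasurableSet (((MeasurableEquiv.toLp 2 (Fin d → ℝ)).symm) ⁻¹'
      (Set.pi Set.univ I)) :=
    ((MeasurableEquiv.toLp 2 (Fin d → ℝ)).symm).measurable (MeasurableSet.univ_pi hI)
  rw [b.measurePreserving_repr.measure_preimage hmeas.nullMeasurableSet]
  rw [(EuclideanSpace.volume_preserving_symm_measurableEquiv_toLp (Fin d)).measure_preimage
    (MeasurableSet.univ_pi hI).nullMeasurableSet]
  rw [volume_pi_pi]

lemma bad_measure_bound (hd : 3 ≤ d) (u w : E) (hu : ‖u‖ = 1) (hw : ‖w‖ = 1)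
    (huw : ⟪u, w⟫ = 0) (ε : ℝ) (hε : 0 ≤ ε) :
    (volume : Measure E).toSphere {θ : Metric.sphere (0:E) 1 | ‖Pvec u w ↑θ‖ ≤ ε}
      ≤ (d : ℝ≥0∞) * ENNReal.ofReal (4 * (2*ε)^(d-2)) := by
  have hd2 : 2 ≤ d := by omega
  obtain ⟨b, hb0, hb1⟩ := exists_adapted_basis hd2 u w hu hw huw
  set i0 : Fin d := ⟨0, by omega⟩
  set i1 : Fin d := ⟨1, by omega⟩
  have hS : MeasurableSet {θ : Metric.sphere (0:E) 1 | ‖Pvec u w ↑θ‖ ≤ ε} := by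
    have hcont : Continuous fun θ : Metric.sphere (0:E) 1 => ‖Pvec u w ↑θ‖ :=
      ((pvec_continuous u w).comp continuous_subtype_val).norm
    exact (isClosed_le hcont continuous_const).measurableSet
  rw [Measure.toSphere_apply' _ hS, finrank_euclideanSpace_fin]
  apply mul_le_mul_right
  set g : Fin d → ℝ := fun i => if (i:ℕ) < 2 then 1 else ε with hg
  have hincl : (Set.Ioo (0:ℝ) 1 • (Subtype.val '' {θ : Metric.sphere (0:E) 1 | ‖Pvec u w ↑θ‖ ≤ ε}))
      ⊆ {z : E | ∀ i, b.repr z i ∈ Icc (-(g i)) (g i)} := by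
    intro z hz
    rcases Set.mem_smul.1 hz with ⟨c, hc, y, hy, rfl⟩
    rcases hy with ⟨θ, hθS, rfl⟩
    have hθnorm : ‖(θ : E)‖ = 1 := norm_eq_of_mem_sphere θ
    have hc0 : (0:ℝ) < c := hc.1
    have hc1 : c < 1 := hc.2
    intro i
    rw [Set.mem_Icc, ← abs_le]
    by_cases hlt : (i:ℕ) < 2
    · have h1 : |b.repr (c • (θ:E)) i| ≤ ‖c • (θ:E)‖ := by
        calc |b.repr (c • (θ:E)) i| ≤ ‖b.repr (c • (θ:E))‖ := coord_le_norm _ i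
          _ = ‖c • (θ:E)‖ := b.repr.norm_map _
      have h2 : ‖c • (θ:E)‖ = c := by
        rw [norm_smul, hθnorm, mul_one, Real.norm_eq_abs, abs_of_pos hc0]
      rw [hg]
      simp only [if_pos hlt]
      rw [h2] at h1
      linarith
    · have h1 : |b.repr (c • (θ:E)) i| ≤ ‖Pvec u w (c • (θ:E))‖ :=
        coord_le_norm_Pvec u w hu hw huw b i0 i1 rfl rfl hb0 hb1 _ i hlt
      have h2 : ‖Pvec u w (c • (θ:E))‖ = c * ‖Pvec u w (θ:E)‖ := by
        rw [Pvec_smul, norm_smul, Real.norm_eq_abs, abs_of_pos hc0]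
      rw [hg]
      simp only [if_neg hlt]
      have h3 : c * ‖Pvec u w (θ:E)‖ ≤ ε := by
        have := hθS
        simp only [Set.mem_setOf_eq] at this
        nlinarith [norm_nonneg (Pvec u w (θ:E))]
      rw [h2] at h1
      linarith
  calc volume (Set.Ioo (0:ℝ) 1 • (Subtype.val '' {θ : Metric.sphere (0:E) 1 | ‖Pvec u w ↑θ‖ ≤ ε}))
      ≤ volume {z : E | ∀ i, b.repr z i ∈ Icc (-(g i)) (g i)} := measure_mono hincl
    _ = ∏ i, volume (Icc (-(g i)) (g i)) := vol_box b _ (fun i => measurableSet_Icc)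
    _ = ENNReal.ofReal (4 * (2*ε)^(d-2)) := by
        have hgnn : ∀ i : Fin d, 0 ≤ 2 * g i := by
          intro i; rw [hg]; dsimp only; split_ifs <;> linarith
        have h4 : ∀ i : Fin d, volume (Icc (-(g i)) (g i)) = ENNReal.ofReal (2 * g i) := by
          intro i
          rw [Real.volume_Icc]
          congr 1
          ring
        rw [Finset.prod_congr rfl (fun i _ => h4 i),
          ← ENNReal.ofReal_prod_of_nonneg (fun i _ => hgnn i)]
        congr 1
        have h5 : ∀ i : Fin d, 2 * g i = if (i:ℕ) < 2 then (2:ℝ) else 2*ε := by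
          intro i; rw [hg]; dsimp only; split_ifs <;> ring
        rw [Finset.prod_congr rfl (fun i _ => h5 i), prod_threshold d hd2]
        ring

set_option maxHeartbeats 1000000 in
lemma good_measure_bound (hd : 3 ≤ d) (u w : E) (hu : ‖u‖ = 1) (hw : ‖w‖ = 1)
    (huw : ⟪u, w⟫ = 0) (ε : ℝ) (hε0 : 0 < ε) (hε8 : ε ≤ 1/8) :
    (d : ℝ≥0∞) * ENNReal.ofReal ((1/8:ℝ)^2 * (ε/(d:ℝ))^(d-2))
      ≤ (volume : Measure E).toSphere
          {θ : Metric.sphere (0:E) 1 | 1/2 ≤ ⟪(θ:E), w⟫ ∧ ‖Pvec u w ↑θ‖ ≤ ε} := by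
  have hd2 : 2 ≤ d := by omega
  have hdR : (1:ℝ) ≤ (d:ℝ) := by exact_mod_cast (by omega : 1 ≤ d)
  obtain ⟨b, hb0, hb1⟩ := exists_adapted_basis hd2 u w hu hw huw
  set i0 : Fin d := ⟨0, by omega⟩
  set i1 : Fin d := ⟨1, by omega⟩
  have hi0v : (i0:ℕ) = 0 := rfl
  have hi1v : (i1:ℕ) = 1 := rfl
  have hi0lt : (i0:ℕ) < 2 := by norm_num [hi0v]
  have hi1lt : (i1:ℕ) < 2 := by norm_num [hi1v]
  set S := {θ : Metric.sphere (0:E) 1 | 1/2 ≤ ⟪(θ:E), w⟫ ∧ ‖Pvec u w ↑θ‖ ≤ ε} with hSdef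
  have hS : MeasurableSet S := by
    have hcont1 : Continuous fun θ : Metric.sphere (0:E) 1 => ⟪(θ:E), w⟫ :=
      (continuous_subtype_val.inner continuous_const)
    have hcont2 : Continuous fun θ : Metric.sphere (0:E) 1 => ‖Pvec u w ↑θ‖ :=
      ((pvec_continuous u w).comp continuous_subtype_val).norm
    have : S = {θ : Metric.sphere (0:E) 1 | 1/2 ≤ ⟪(θ:E), w⟫} ∩
        {θ : Metric.sphere (0:E) 1 | ‖Pvec u w ↑θ‖ ≤ ε} := rfl
    rw [this]
    exact ((isClosed_le continuous_const hcont1).measurableSet).inter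
      ((isClosed_le hcont2 continuous_const).measurableSet)
  rw [Measure.toSphere_apply' _ hS, finrank_euclideanSpace_fin]
  apply mul_le_mul_right
  set t : ℝ := ε/(2*(d:ℝ)) with htdef
  have ht0 : 0 < t := by rw [htdef]; positivity
  set I : Fin d → Set ℝ := fun i =>
    if (i:ℕ) = 1 then Icc (3/4) (7/8) else if (i:ℕ) < 2 then Icc 0 (1/8)
    else Icc (-t) t with hI
  have hincl : {z : E | ∀ i, b.repr z i ∈ I i}
      ⊆ Set.Ioo (0:ℝ) 1 • (Subtype.val '' S) := by
    intro z hz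
    have hz1 : b.repr z i1 ∈ Icc (3/4:ℝ) (7/8) := by
      have h := hz i1
      rw [hI] at h
      dsimp only at h
      rwa [if_pos (by norm_num)] at h
    have hz0 : b.repr z i0 ∈ Icc (0:ℝ) (1/8) := by
      have h := hz i0
      rw [hI] at h
      dsimp only at h
      rwa [if_neg (by norm_num), if_pos (by norm_num)] at h
    have hother : ∀ i : Fin d, ¬ ((i:ℕ) < 2) → |b.repr z i| ≤ t := by
      intro i hi
      have := hz i
      rw [hI] at this
      simp only [if_neg (by omega : ¬ ((i:ℕ) = 1)), if_neg hi] at this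
      exact abs_le.2 ⟨this.1, this.2⟩
    -- bound on the squared norm
    have hsq : ∀ i : Fin d, i ≠ i0 → i ≠ i1 → (b.repr z i)^2 ≤ t^2 := by
      intro i h0 h1
      have hge : ¬ ((i:ℕ) < 2) := by
        intro hlt
        rcases (by omega : (i:ℕ) = 0 ∨ (i:ℕ) = 1) with h | h
        · exact h0 (Fin.ext (by rw [h, hi0v]))
        · exact h1 (Fin.ext (by rw [h, hi1v]))
      have := hother i hge
      nlinarith [abs_nonneg (b.repr z i), sq_abs (b.repr z i)]
    have hz_normsq : ‖z‖^2 ≤ (1/8:ℝ)^2 + (7/8)^2 + (d:ℝ)*t^2 := by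
      have h1 : ‖z‖^2 = ∑ i, (b.repr z i)^2 := by
        rw [← b.repr.norm_map z, norm_sq_eucl]
      rw [h1]
      have hi1mem : i1 ∈ Finset.univ.erase i0 := by
        rw [Finset.mem_erase]
        exact ⟨fun h => by simpa using congrArg Fin.val h, Finset.mem_univ _⟩
      have e1 : ∑ i, (b.repr z i)^2
          = (b.repr z i0)^2 + ((b.repr z i1)^2 + ∑ i ∈ (Finset.univ.erase i0).erase i1,
              (b.repr z i)^2) := by
        rw [← Finset.add_sum_erase _ (fun i => (b.repr z i)^2) (Finset.mem_univ i0)]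
        congr 1
        rw [← Finset.add_sum_erase _ (fun i => (b.repr z i)^2) hi1mem]
      rw [e1]
      have hrest : ∑ i ∈ (Finset.univ.erase i0).erase i1, (b.repr z i)^2 ≤ (d:ℝ)*t^2 := by
        have hb : ∀ i ∈ (Finset.univ.erase i0).erase i1, (b.repr z i)^2 ≤ t^2 := by
          intro i hi
          rw [Finset.mem_erase, Finset.mem_erase] at hi
          exact hsq i hi.2.1 hi.1
        calc ∑ i ∈ (Finset.univ.erase i0).erase i1, (b.repr z i)^2
            ≤ ((Finset.univ.erase i0).erase i1).card • t^2 := Finset.sum_le_card_nsmul _ _ _ hb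
          _ = (((Finset.univ.erase i0).erase i1).card : ℝ) * t^2 := nsmul_eq_mul _ _
          _ ≤ (d:ℝ)*t^2 := by
              apply mul_le_mul_of_nonneg_right _ (sq_nonneg t)
              have hcard : ((Finset.univ.erase i0).erase i1).card ≤ d := by
                calc ((Finset.univ.erase i0).erase i1).card
                    ≤ (Finset.univ : Finset (Fin d)).card :=
                      Finset.card_le_card (subset_trans (Finset.erase_subset _ _)
                        (Finset.erase_subset _ _))
                  _ = d := by simp
              exact_mod_cast hcard
      have hsq0 : (b.repr z i0)^2 ≤ (1/8:ℝ)^2 := by nlinarith [hz0.1, hz0.2]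
      have hsq1 : (b.repr z i1)^2 ≤ (7/8:ℝ)^2 := by nlinarith [hz1.1, hz1.2]
      linarith
    have hdt : (d:ℝ)*t^2 ≤ ε^2/4 := by
      rw [htdef]
      rw [show (d:ℝ) * (ε/(2*(d:ℝ)))^2 = ε^2/(4*(d:ℝ)) by field_simp; ring]
      rw [div_le_div_iff₀ (by positivity) (by norm_num)]
      nlinarith
    have hz_norm_lt : ‖z‖ < 1 := by
      have h2 : ‖z‖^2 < 1 := by nlinarith
      nlinarith [norm_nonneg z]
    have hz_norm_ge : (3/4:ℝ) ≤ ‖z‖ := by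
      have h1 : b.repr z i1 ≤ |b.repr z i1| := le_abs_self _
      have h2 : |b.repr z i1| ≤ ‖b.repr z‖ := coord_le_norm _ i1
      rw [b.repr.norm_map z] at h2
      linarith [hz1.1]
    have hc0 : (0:ℝ) < ‖z‖ := by linarith
    have hPz : ‖Pvec u w z‖ ≤ ε/2 := by
      have h1 : ‖Pvec u w z‖^2 ≤ (d:ℝ)*t^2 := by
        rw [norm_Pvec_sq u w hu hw huw b i0 i1 rfl rfl hb0 hb1 z]
        calc ∑ i : Fin d, (if (i:ℕ) < 2 then 0 else (b.repr z i)^2)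
            ≤ ∑ _i : Fin d, t^2 := by
              apply Finset.sum_le_sum
              intro i _
              split_ifs with h
              · positivity
              · have hne0 : i ≠ i0 := fun hh => h (by rw [hh]; exact hi0lt)
                have hne1 : i ≠ i1 := fun hh => h (by rw [hh]; exact hi1lt)
                exact hsq i hne0 hne1
          _ = (d:ℝ)*t^2 := by rw [Finset.sum_const]; simp [nsmul_eq_mul]
      have h2 : ‖Pvec u w z‖^2 ≤ (ε/2)^2 := by
        have : (ε/2)^2 = ε^2/4 := by ring
        rw [this]
        linarith
      nlinarith [norm_nonneg (Pvec u w z)]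
    -- construct the sphere point
    set c : ℝ := ‖z‖ with hcdef
    have hcne : c ≠ 0 := ne_of_gt hc0
    have hθvnorm : ‖c⁻¹ • z‖ = 1 := by
      rw [norm_smul, Real.norm_eq_abs, abs_inv, abs_of_pos hc0, ← hcdef,
        inv_mul_cancel₀ hcne]
    have h1c : (1:ℝ) ≤ c⁻¹ := by
      rw [← one_div, le_div_iff₀ hc0]
      linarith
    have h43 : c⁻¹ ≤ 4/3 := by
      rw [← one_div, div_le_iff₀ hc0]
      linarith
    have hzw : (3/4:ℝ) ≤ ⟪z, w⟫ := by
      have h1 : ⟪z, w⟫ = b.repr z i1 := by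
        rw [b.repr_apply_apply, hb1, real_inner_comm]
      rw [h1]
      exact hz1.1
    have hθS : (⟨c⁻¹ • z, mem_sphere_zero_iff_norm.2 hθvnorm⟩ :
        Metric.sphere (0:E) 1) ∈ S := by
      constructor
      · show (1:ℝ)/2 ≤ ⟪c⁻¹ • z, w⟫
        rw [real_inner_smul_left]
        nlinarith
      · show ‖Pvec u w (c⁻¹ • z)‖ ≤ ε
        rw [Pvec_smul, norm_smul, Real.norm_eq_abs, abs_inv, abs_of_pos hc0]
        calc c⁻¹ * ‖Pvec u w z‖ ≤ (4/3) * (ε/2) := by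
              apply mul_le_mul h43 hPz (norm_nonneg _) (by norm_num)
          _ ≤ ε := by linarith
    apply Set.mem_smul.2
    refine ⟨c, ⟨hc0, hz_norm_lt⟩, c⁻¹ • z, ⟨_, hθS, rfl⟩, ?_⟩
    rw [smul_smul, mul_inv_cancel₀ hcne, one_smul]
  -- volume computation
  have hvol : volume {z : E | ∀ i, b.repr z i ∈ I i}
      = ENNReal.ofReal ((1/8:ℝ)^2 * (ε/(d:ℝ))^(d-2)) := by
    rw [vol_box b I (fun i => by rw [hI]; dsimp only; split_ifs <;> exact measurableSet_Icc)]
    have h4 : ∀ i : Fin d, volume (I i)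
        = ENNReal.ofReal (if (i:ℕ) < 2 then (1/8:ℝ) else ε/(d:ℝ)) := by
      intro i
      rw [hI]
      dsimp only
      by_cases h1 : (i:ℕ) = 1
      · rw [if_pos h1, if_pos (by omega), Real.volume_Icc]
        norm_num
      · by_cases h2 : (i:ℕ) < 2
        · rw [if_neg h1, if_pos h2, if_pos h2, Real.volume_Icc]
          norm_num
        · rw [if_neg h1, if_neg h2, if_neg h2, Real.volume_Icc]
          congr 1
          rw [htdef]
          rw [show t - -t = 2*t by ring, htdef]
          rw [show 2*(ε/(2*(d:ℝ))) = (2*ε)/(2*(d:ℝ)) by ring]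
          rw [mul_div_mul_left ε (d:ℝ) (by norm_num)]
    rw [Finset.prod_congr rfl (fun i _ => h4 i)]
    rw [← ENNReal.ofReal_prod_of_nonneg (fun i _ => by split_ifs <;> positivity)]
    congr 1
    rw [prod_threshold d hd2]
  calc ENNReal.ofReal ((1/8:ℝ)^2 * (ε/(d:ℝ))^(d-2))
      = volume {z : E | ∀ i, b.repr z i ∈ I i} := hvol.symm
    _ ≤ volume (Set.Ioo (0:ℝ) 1 • (Subtype.val '' S)) := measure_mono hincl


end Main

theorem stmt7 (d : ℕ) (hd : 3 ≤ d) :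
    ∃ c c' : ℝ, 0 < c ∧ c ≤ c' ∧
      ∀ r : ℝ, 1 ≤ r → ∀ x : EuclideanSpace ℝ (Fin d), ∀ L : Set (EuclideanSpace ℝ (Fin d)),
        IsLine L → Metric.infDist x L = r →
          ENNReal.ofReal (c / r ^ (d - 2)) ≤
              (∫⁻ θ : Metric.sphere (0 : EuclideanSpace ℝ (Fin d)) 1,
                μH[(d : ℝ) - 1] (projHyp (θ : EuclideanSpace ℝ (Fin d)) '' Metric.closedBall x 1 ∩
                  projHyp (θ : EuclideanSpace ℝ (Fin d)) '' cylinder L 1)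
                ∂(sphereUniform d)) ∧
            (∫⁻ θ : Metric.sphere (0 : EuclideanSpace ℝ (Fin d)) 1,
                μH[(d : ℝ) - 1] (projHyp (θ : EuclideanSpace ℝ (Fin d)) '' Metric.closedBall x 1 ∩
                  projHyp (θ : EuclideanSpace ℝ (Fin d)) '' cylinder L 1)
                ∂(sphereUniform d))
              ≤ ENNReal.ofReal (c' / r ^ (d - 2)) := by
  classical
  set E' := EuclideanSpace ℝ (Fin d)
  have hd1 : 1 ≤ d := by omega
  -- basic constants
  set τ : ℝ≥0∞ := volume (Metric.ball (0 : EuclideanSpace ℝ (Fin d)) 1) with hτdef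
  have hτ0 : τ ≠ 0 := (measure_ball_pos volume _ one_pos).ne'
  have hτtop : τ ≠ ⊤ := measure_ball_lt_top.ne
  set κ : ℝ≥0∞ := capVal d (1/2) with hκdef
  set K : ℝ≥0∞ := capVal d 1 with hKdef
  have hκ0 : κ ≠ 0 := (capVal_pos d hd).ne'
  have hκtop : κ ≠ ⊤ := (capVal_lt_top d hd1 _).ne
  have hKtop : K ≠ ⊤ := (capVal_lt_top d hd1 _).ne
  have hκR : 0 < κ.toReal := ENNReal.toReal_pos hκ0 hκtop
  have hKR : 0 ≤ K.toReal := ENNReal.toReal_nonneg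
  have hτR : 0 < τ.toReal := ENNReal.toReal_pos hτ0 hτtop
  have hdR : (0:ℝ) < d := by positivity
  have hdR3 : (3:ℝ) ≤ d := by exact_mod_cast hd
  -- the real constants
  set c : ℝ := κ.toReal * (((d:ℝ) * τ.toReal)⁻¹ * ((d:ℝ) *
      ((1/8:ℝ)^2 * (1/(8*(d:ℝ)))^(d-2)))) with hcdef
  set c'' : ℝ := K.toReal * (((d:ℝ) * τ.toReal)⁻¹ * ((d:ℝ) * (4 * (16:ℝ)^(d-2)))) with hc''def
  have hc0 : 0 < c := by
    rw [hcdef]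
    have h1 : (0:ℝ) < ((d:ℝ) * τ.toReal)⁻¹ := by positivity
    positivity
  have hc''0 : 0 ≤ c'' := by
    rw [hc''def]
    have h1 : (0:ℝ) < ((d:ℝ) * τ.toReal)⁻¹ := by positivity
    positivity
  refine ⟨c, max c c'', hc0, le_max_left _ _, ?_⟩
  intro r hr x L hLine hdist
  have hr0 : (0:ℝ) < r := lt_of_lt_of_le one_pos hr
  have hrpow : (0:ℝ) < r ^ (d-2) := by positivity
  obtain ⟨a, v, hv, hL⟩ := hLine
  subst hL
  set u : EuclideanSpace ℝ (Fin d) := ‖v‖⁻¹ • v with hudef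
  have hu : ‖u‖ = 1 := norm_smul_inv_norm hv
  rw [isline_unit hv] at hdist ⊢
  rw [line_infDist a u hu x] at hdist
  set w : EuclideanSpace ℝ (Fin d) := wvec a u x r with hwdef
  have hw : ‖w‖ = 1 := norm_wvec a u x r hr0 hdist
  have huw : ⟪u, w⟫ = 0 := inner_u_wvec a u x r hu
  set Lset := {y : EuclideanSpace ℝ (Fin d) | ∃ t : ℝ, y = a + t • u} with hLset
  set f : Metric.sphere (0 : EuclideanSpace ℝ (Fin d)) 1 → ℝ≥0∞ := fun θ =>
    μH[(d : ℝ) - 1] (projHyp (θ : EuclideanSpace ℝ (Fin d)) '' Metric.closedBall x 1 ∩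
      projHyp (θ : EuclideanSpace ℝ (Fin d)) '' cylinder Lset 1) with hfdef
  -- toSphere total mass
  set T := (volume : Measure (EuclideanSpace ℝ (Fin d))).toSphere with hTdef
  have hTuniv : T Set.univ = (d : ℝ≥0∞) * τ := by
    rw [hTdef, Measure.toSphere_apply_univ, finrank_euclideanSpace_fin, hτdef]
  -- key ofReal conversion
  have hdτ : ((d:ℝ≥0∞) * τ) = ENNReal.ofReal ((d:ℝ) * τ.toReal) := by
    rw [ENNReal.ofReal_mul (le_of_lt hdR), ENNReal.ofReal_natCast,
      ENNReal.ofReal_toReal hτtop]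
  have key : ∀ (ρ : ℝ≥0∞), ρ ≠ ⊤ → ∀ (vv : ℝ), 0 ≤ vv →
      ρ * (((d:ℝ≥0∞) * τ)⁻¹ * ((d : ℝ≥0∞) * ENNReal.ofReal vv))
        = ENNReal.ofReal (ρ.toReal * (((d:ℝ) * τ.toReal)⁻¹ * ((d:ℝ) * vv))) := by
    intro ρ hρ vv hvv
    have h1 : ((d:ℝ≥0∞) * τ)⁻¹ = ENNReal.ofReal (((d:ℝ) * τ.toReal)⁻¹) := by
      rw [hdτ, ← ENNReal.ofReal_inv_of_pos (by positivity)]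
    rw [h1, ← ENNReal.ofReal_toReal hρ]
    rw [← ENNReal.ofReal_natCast d]
    rw [← ENNReal.ofReal_mul (by positivity)]
    rw [← ENNReal.ofReal_mul (by positivity)]
    rw [← ENNReal.ofReal_mul (by exact ENNReal.toReal_nonneg)]
    congr 2
    rw [ENNReal.toReal_ofReal ENNReal.toReal_nonneg]
  constructor
  · -- LOWER BOUND
    set Good := {θ : Metric.sphere (0 : EuclideanSpace ℝ (Fin d)) 1 |
      1/2 ≤ ⟪(θ : EuclideanSpace ℝ (Fin d)), w⟫ ∧
        ‖Pvec u w (θ : EuclideanSpace ℝ (Fin d))‖ ≤ 1/(8*r)} with hGooddef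
    have hGoodMeas : MeasurableSet Good := by
      have hcont1 : Continuous fun θ : Metric.sphere (0 : EuclideanSpace ℝ (Fin d)) 1 =>
          ⟪(θ : EuclideanSpace ℝ (Fin d)), w⟫ :=
        (continuous_subtype_val.inner continuous_const)
      have hcont2 : Continuous fun θ : Metric.sphere (0 : EuclideanSpace ℝ (Fin d)) 1 =>
          ‖Pvec u w (θ : EuclideanSpace ℝ (Fin d))‖ :=
        ((pvec_continuous u w).comp continuous_subtype_val).norm
      exact ((isClosed_le continuous_const hcont1).measurableSet).inter
        ((isClosed_le hcont2 continuous_const).measurableSet)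
    have hind : ∀ θ, Good.indicator (fun _ => κ) θ ≤ f θ := by
      intro θ
      by_cases hmem : θ ∈ Good
      · rw [Set.indicator_of_mem hmem]
        obtain ⟨c₀, hc₀, hsub⟩ := good_criterion a u x r hu hr hdist
          (θ : EuclideanSpace ℝ (Fin d)) (norm_eq_of_mem_sphere θ) hmem.1 hmem.2
        calc κ = μH[(d : ℝ) - 1] (capSet (θ : EuclideanSpace ℝ (Fin d)) c₀ (1/2)) :=
              (hausdorff_capSet hd1 _ c₀ (norm_eq_of_mem_sphere θ) hc₀ (1/2)).symm
          _ ≤ f θ := measure_mono hsub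
      · rw [Set.indicator_of_notMem hmem]
        exact zero_le
    have hlow : ENNReal.ofReal (c / r ^ (d-2)) ≤ κ * ((T Set.univ)⁻¹ * T Good) := by
      have h1 : (d : ℝ≥0∞) * ENNReal.ofReal ((1/8:ℝ)^2 * ((1/(8*r))/(d:ℝ))^(d-2))
          ≤ T Good := by
        apply good_measure_bound hd u w hu hw huw (1/(8*r)) (by positivity)
        rw [div_le_div_iff₀ (by positivity) (by norm_num)]
        linarith
      have h2 : κ * ((T Set.univ)⁻¹ * ((d : ℝ≥0∞) *
          ENNReal.ofReal ((1/8:ℝ)^2 * ((1/(8*r))/(d:ℝ))^(d-2))))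
          ≤ κ * ((T Set.univ)⁻¹ * T Good) := by
        apply mul_le_mul_right
        exact mul_le_mul_right h1 _
      refine le_trans (le_of_eq ?_) h2
      rw [hTuniv]
      rw [key κ hκtop _ (by positivity)]
      congr 1
      rw [hcdef]
      have harg : ((1/(8*r))/(d:ℝ))^(d-2) = (1/(8*(d:ℝ)))^(d-2) * (1/r)^(d-2) := by
        rw [← mul_pow]
        congr 1
        field_simp
      rw [harg]
      field_simp
      ring_nf
      rw [← mul_pow, mul_inv_cancel₀ hr0.ne', one_pow]
    refine le_trans hlow ?_
    calc κ * ((T Set.univ)⁻¹ * T Good)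
        = κ * (sphereUniform d Good) := by
          rw [sphereUniform, Measure.smul_apply, smul_eq_mul, hTdef]
      _ = ∫⁻ θ, Good.indicator (fun _ => κ) θ ∂(sphereUniform d) := by
          rw [lintegral_indicator_const hGoodMeas]
      _ ≤ ∫⁻ θ, f θ ∂(sphereUniform d) := lintegral_mono hind
  · -- UPPER BOUND
    set Bad := {θ : Metric.sphere (0 : EuclideanSpace ℝ (Fin d)) 1 |
      ‖Pvec u w (θ : EuclideanSpace ℝ (Fin d))‖ ≤ 8/r} with hBaddef
    have hBadMeas : MeasurableSet Bad := by
      have hcont2 : Continuous fun θ : Metric.sphere (0 : EuclideanSpace ℝ (Fin d)) 1 =>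
          ‖Pvec u w (θ : EuclideanSpace ℝ (Fin d))‖ :=
        ((pvec_continuous u w).comp continuous_subtype_val).norm
      exact (isClosed_le hcont2 continuous_const).measurableSet
    have hind : ∀ θ, f θ ≤ Bad.indicator (fun _ => K) θ := by
      intro θ
      have hθn : ‖(θ : EuclideanSpace ℝ (Fin d))‖ = 1 := norm_eq_of_mem_sphere θ
      by_cases hmem : θ ∈ Bad
      · rw [Set.indicator_of_mem hmem]
        calc f θ ≤ μH[(d : ℝ) - 1] (projHyp (θ : EuclideanSpace ℝ (Fin d)) ''
              Metric.closedBall x 1) := measure_mono Set.inter_subset_left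
          _ = K := by
              rw [projHyp_image_closedBall _ hθn x 1 (by norm_num)]
              exact hausdorff_capSet hd1 _ _ hθn (inner_projHyp _ x hθn) 1
      · rw [Set.indicator_of_notMem hmem]
        have hempty : (projHyp (θ : EuclideanSpace ℝ (Fin d)) '' Metric.closedBall x 1 ∩
            projHyp (θ : EuclideanSpace ℝ (Fin d)) '' cylinder Lset 1) = ∅ := by
          by_contra hne
          rw [← Set.not_nonempty_iff_eq_empty, not_not] at hne
          apply hmem
          have hcrit := empty_criterion a u x r hu hr hdist _ hθn hne
          show ‖Pvec u w (θ : EuclideanSpace ℝ (Fin d))‖ ≤ 8/r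
          by_cases hr4 : 4 ≤ r
          · have h1 : r - 2 > 0 := by linarith
            have h2 : ‖Pvec u w (θ : EuclideanSpace ℝ (Fin d))‖ ≤ 2/(r-2) := by
              rw [← le_div_iff₀' h1] at hcrit
              exact hcrit
            refine le_trans h2 ?_
            rw [div_le_div_iff₀ h1 hr0]
            linarith
          · have h1 : ‖Pvec u w (θ : EuclideanSpace ℝ (Fin d))‖ ≤ 1 :=
              le_trans (norm_Pvec_le u w hu hw huw _) (le_of_eq hθn)
            refine le_trans h1 ?_
            rw [le_div_iff₀ hr0]
            linarith
        rw [hfdef]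
        dsimp only
        rw [hempty]
        simp
    have hup : ∫⁻ θ, f θ ∂(sphereUniform d) ≤ K * ((T Set.univ)⁻¹ * T Bad) := by
      calc ∫⁻ θ, f θ ∂(sphereUniform d)
          ≤ ∫⁻ θ, Bad.indicator (fun _ => K) θ ∂(sphereUniform d) := lintegral_mono hind
        _ = K * (sphereUniform d Bad) := lintegral_indicator_const hBadMeas K
        _ = K * ((T Set.univ)⁻¹ * T Bad) := by
            rw [sphereUniform, Measure.smul_apply, smul_eq_mul, hTdef]
    refine le_trans hup ?_
    have h1 : T Bad ≤ (d : ℝ≥0∞) * ENNReal.ofReal (4 * (2*(8/r))^(d-2)) :=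
      bad_measure_bound hd u w hu hw huw (8/r) (by positivity)
    have h2 : K * ((T Set.univ)⁻¹ * T Bad)
        ≤ K * ((T Set.univ)⁻¹ * ((d : ℝ≥0∞) * ENNReal.ofReal (4 * (2*(8/r))^(d-2)))) := by
      apply mul_le_mul_right
      exact mul_le_mul_right h1 _
    refine le_trans h2 ?_
    rw [hTuniv, key K hKtop _ (by positivity)]
    apply ENNReal.ofReal_le_ofReal
    have harg : (2*(8/r))^(d-2) = (16:ℝ)^(d-2) * (1/r)^(d-2) := by
      rw [← mul_pow]
      congr 1
      field_simp
      norm_num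
    rw [harg]
    have heq : K.toReal * (((d:ℝ) * τ.toReal)⁻¹ * ((d:ℝ) * (4 * ((16:ℝ)^(d-2) * (1/r)^(d-2)))))
        = c'' / r^(d-2) := by
      rw [hc''def]
      field_simp
      rw [mul_assoc, ← mul_pow, one_div, inv_mul_cancel₀ hr0.ne', one_pow, mul_one]
    rw [heq]
    gcongr
    exact le_max_right c c''
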